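/- Let n ≥ 1 and let X be a real n×2n matrix such that Δ_I(X) = −Δ_{S(I)}(X) for every n-element subset I of {1,…,2n}. Then Δ_I(X) = 0 for every such I; in particular, no matrix of rank n satisfies this condition. -/

import Mathlib

open Matrix

/-- `Δ_I(X)`: the determinant of the `n × n` submatrix of the `n × 2n` matrix `X`
formed by the columns indexed by `I` (taken in increasing order); `0` if `I.card ≠ n`. -/
noncomputable def Delta {n : ℕ} (X : Matrix (Fin n) (Fin (2*n)) ℝ)
    (I : Finset (Fin (2*n))) : ℝ :=
  if h : I.card = n then
    (X.submatrix id (fun j : Fin n => ((I.orderIsoOfFin h j : Fin (2*n))))).det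
  else 0

/-- Rotation of column indices by `n` modulo `2n`. -/
def rotIdx (n : ℕ) (i : Fin (2*n)) : Fin (2*n) :=
  ⟨((i : ℕ) + n) % (2*n), Nat.mod_lt _ (Nat.lt_of_le_of_lt (Nat.zero_le _) i.isLt)⟩

lemma rotIdx_rotIdx {n : ℕ} (i : Fin (2*n)) : rotIdx n (rotIdx n i) = i := by
  have h2 : (i : ℕ) < 2*n := i.isLt
  apply Fin.ext
  show (((i : ℕ) + n) % (2*n) + n) % (2*n) = (i : ℕ)
  rw [Nat.mod_add_mod]
  have : (i : ℕ) + n + n = (i : ℕ) + 2*n := by ring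
  rw [this, show (i:ℕ) + 2*n = (i:ℕ) + 1*(2*n) by ring, Nat.add_mul_mod_self_right]
  exact Nat.mod_eq_of_lt h2

lemma rotIdx_ne {n : ℕ} (i : Fin (2*n)) : rotIdx n i ≠ i := by
  have h2 : (i : ℕ) < 2*n := i.isLt
  have hn : 0 < n := by by_contra h; omega
  intro h
  have hv : ((i : ℕ) + n) % (2*n) = (i : ℕ) := congrArg Fin.val h
  rcases Nat.lt_or_ge ((i:ℕ) + n) (2*n) with hlt | hge
  · rw [Nat.mod_eq_of_lt hlt] at hv; omega
  · have : ((i:ℕ) + n) % (2*n) = (i:ℕ) + n - 2*n := by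
      rw [Nat.mod_eq_sub_mod hge, Nat.mod_eq_of_lt (by omega)]
    omega

lemma rotIdx_inj {n : ℕ} : Function.Injective (rotIdx n) :=
  Function.Involutive.injective rotIdx_rotIdx

lemma delta_ne_iff {n : ℕ} (X : Matrix (Fin n) (Fin (2*n)) ℝ)
    (I : Finset (Fin (2*n))) (h : I.card = n) :
    Delta X I ≠ 0 ↔ LinearIndependent ℝ (fun i : ↥I => Xᵀ ↑i) := by
  classical
  rw [Delta, dif_pos h]
  set M := X.submatrix id (fun j : Fin n => ((I.orderIsoOfFin h j : Fin (2*n)))) with hM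
  rw [← isUnit_iff_ne_zero, ← Matrix.isUnit_iff_isUnit_det,
    ← Matrix.linearIndependent_cols_iff_isUnit]
  exact (linearIndependent_equiv' (R := ℝ) (I.orderIsoOfFin h).toEquiv
    (f := fun i : ↥I => Xᵀ ↑i) (g := fun j => Mᵀ j) rfl)

lemma exchange_li {K V ι : Type*} [Field K] [AddCommGroup V] [Module K V]
    [Fintype ι] [DecidableEq ι]
    (B : Module.Basis ι K V) (w : V) (a : ι) (ha : B.repr w a ≠ 0) :
    LinearIndependent K (fun i => if i = a then w else B i) := by
  rw [Fintype.linearIndependent_iff]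
  intro g hg
  have key : ∀ i, g i • (B.coord a) (if i = a then w else B i)
      = if i = a then g a * B.repr w a else 0 := by
    intro i
    by_cases hi : i = a
    · subst hi; simp [Module.Basis.coord_apply]
    · simp [hi, Module.Basis.coord_apply, Module.Basis.repr_self, Finsupp.single_apply_eq_zero]
  have h2 : g a * B.repr w a = 0 := by
    have hc := congrArg (B.coord a) hg
    rw [map_sum, map_zero] at hc
    simp only [_root_.map_smul, smul_eq_mul] at hc
    rw [Finset.sum_congr rfl (fun i _ => by
      simpa [smul_eq_mul] using key i)] at hc
    simpa using hc
  have hga : g a = 0 := by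
    rcases mul_eq_zero.mp h2 with h | h
    · exact h
    · exact absurd h ha
  have hg' : ∑ i, g i • B i = 0 := by
    rw [← hg]
    refine Finset.sum_congr rfl (fun i _ => ?_)
    by_cases hi : i = a
    · subst hi; simp [hga]
    · simp [hi]
  exact Fintype.linearIndependent_iff.mp B.linearIndependent g hg'

theorem stmt1 (n : ℕ) (hn : 1 ≤ n) (X : Matrix (Fin n) (Fin (2*n)) ℝ)
    (hneg : ∀ I : Finset (Fin (2*n)), I.card = n →
      Delta X I = - Delta X (Iᶜ.image (rotIdx n))) :
    (∀ I : Finset (Fin (2*n)), I.card = n → Delta X I = 0) ∧ X.rank ≠ n := by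
  classical
  set ρ := rotIdx n with hρdef
  have hcompl : ∀ I : Finset (Fin (2*n)), I.card = n → (Iᶜ.image ρ).card = n := by
    intro I hI
    rw [Finset.card_image_of_injective _ rotIdx_inj, Finset.card_compl, hI]
    simp; omega
  have main : ∀ I : Finset (Fin (2*n)), I.card = n → Delta X I = 0 := by
    by_contra hcon
    push_neg at hcon
    obtain ⟨I₀, hI₀card, hI₀⟩ := hcon
    set B : Finset (Finset (Fin (2*n))) :=
      Finset.univ.filter (fun I => I.card = n ∧ Delta X I ≠ 0) with hBdef
    have hBne : B.Nonempty := ⟨I₀, by simp [hBdef, hI₀card, hI₀]⟩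
    obtain ⟨I, hIB, hImin⟩ := B.exists_min_image (fun J => (J ∩ J.image ρ).card) hBne
    rw [hBdef, Finset.mem_filter] at hIB
    obtain ⟨-, hIcard, hIΔ⟩ := hIB
    set J := Iᶜ.image ρ with hJdef
    have hJcard : J.card = n := hcompl I hIcard
    have hJΔ : Delta X J ≠ 0 := by
      have := hneg I hIcard
      intro h; rw [h] at this; simp at this; exact hIΔ this
    by_cases hex : ∃ a ∈ I, ρ a ∈ I
    · obtain ⟨a, haI, hρaI⟩ := hex
      set T : Finset (Fin (2*n)) := I.filter (fun i => ρ i ∉ I) with hTdef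
      have hTI : T ⊆ I := Finset.filter_subset _ _
      have hI_li : LinearIndependent ℝ (fun i : ↥I => Xᵀ ↑i) :=
        (delta_ne_iff X I hIcard).mp hIΔ
      haveI : Nonempty ↥I := ⟨⟨a, haI⟩⟩
      have hcardI : Fintype.card ↥I = Module.finrank ℝ (Fin n → ℝ) := by
        rw [Fintype.card_coe, hIcard, Module.finrank_fin_fun]
      let Bas : Module.Basis ↥I ℝ (Fin n → ℝ) :=
        basisOfLinearIndependentOfCardEqFinrank hI_li hcardI
      have hBas : ∀ i : ↥I, Bas i = Xᵀ ↑i := fun i => by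
        rw [show Bas = basisOfLinearIndependentOfCardEqFinrank hI_li hcardI from rfl,
          coe_basisOfLinearIndependentOfCardEqFinrank]
      have claim1 : ∀ b : Fin (2*n), b ∉ I → ρ b ∉ I →
          Xᵀ b ∈ Submodule.span ℝ (Xᵀ '' ↑T) := by
        intro b hbI hρbI
        have hcoef : ∀ i : ↥I, (i : Fin (2*n)) ∉ T → Bas.repr (Xᵀ b) i = 0 := by
          intro i hiT
          by_contra hlam
          have hρiI : ρ ↑i ∈ I := by
            by_contra h
            exact hiT (Finset.mem_filter.mpr ⟨i.2, h⟩)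
          set I' := insert b (I.erase ↑i) with hI'def
          have hbnotin : b ∉ I.erase ↑i := fun h => hbI (Finset.mem_of_mem_erase h)
          have hI'card : I'.card = n := by
            rw [hI'def, Finset.card_insert_of_notMem hbnotin,
              Finset.card_erase_of_mem i.2, hIcard]
            omega
          -- independence of the I' family
          have hli' : LinearIndependent ℝ (fun j : ↥I' => Xᵀ ↑j) := by
            have hxch := exchange_li Bas (Xᵀ b) i hlam
            have hxch' : LinearIndependent ℝ
                (fun k : ↥I => if (k : Fin (2*n)) = ↑i then Xᵀ b else Xᵀ ↑k) := by
              convert hxch using 1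
              case e'_5 => rfl
              case e'_6 => rfl
              funext k
              by_cases hk : k = i
              · subst hk; simp
              · have : (k : Fin (2*n)) ≠ ↑i := fun h => hk (Subtype.ext h)
                simp [this, hk, hBas k]
            -- build the equivalence ↥I ≃ ↥I'
            have hmembI' : b ∈ I' := Finset.mem_insert_self _ _
            let φ : ↥I → ↥I' := fun k =>
              if h : (k : Fin (2*n)) = ↑i then ⟨b, hmembI'⟩
              else ⟨↑k, Finset.mem_insert_of_mem (Finset.mem_erase.mpr ⟨h, k.2⟩)⟩
            have hφbij : Function.Bijective φ := by
              constructor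
              · intro k1 k2 hk
                by_cases h1 : (k1 : Fin (2*n)) = ↑i <;>
                  by_cases h2 : (k2 : Fin (2*n)) = ↑i
                · exact Subtype.ext (h1.trans h2.symm)
                · exfalso
                  simp only [φ, dif_pos h1, dif_neg h2] at hk
                  have : b = (k2 : Fin (2*n)) := Subtype.mk_eq_mk.mp hk
                  exact hbI (this ▸ k2.2)
                · exfalso
                  simp only [φ, dif_pos h2, dif_neg h1] at hk
                  have : (k1 : Fin (2*n)) = b := Subtype.mk_eq_mk.mp hk
                  exact hbI (this ▸ k1.2)
                · simp only [φ, dif_neg h1, dif_neg h2] at hk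
                  exact Subtype.ext (Subtype.mk_eq_mk.mp hk)
              · rintro ⟨x, hx⟩
                rcases Finset.mem_insert.mp hx with h | h
                · refine ⟨i, ?_⟩
                  simp only [φ, dif_pos rfl]
                  exact Subtype.ext h.symm
                · obtain ⟨hxne, hxI⟩ := Finset.mem_erase.mp h
                  refine ⟨⟨x, hxI⟩, ?_⟩
                  simp only [φ, dif_neg hxne]
            have hcomp : (fun j : ↥I' => Xᵀ ↑j) ∘ φ
                = (fun k : ↥I => if (k : Fin (2*n)) = ↑i then Xᵀ b else Xᵀ ↑k) := by
              funext k
              by_cases hk : (k : Fin (2*n)) = ↑i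
              · simp [φ, hk, Subtype.ext hk]
              · have hk' : k ≠ i := fun h => hk (congrArg Subtype.val h)
                simp [φ, hk, hk']
            exact (linearIndependent_equiv' (R := ℝ) (Equiv.ofBijective φ hφbij)
              (f := fun j : ↥I' => Xᵀ ↑j)
              (g := fun k : ↥I => if (k : Fin (2*n)) = ↑i then Xᵀ b else Xᵀ ↑k)
              hcomp).mp hxch'
          have hI'Δ : Delta X I' ≠ 0 := (delta_ne_iff X I' hI'card).mpr hli'
          have hI'B : I' ∈ B := by
            rw [hBdef, Finset.mem_filter]
            exact ⟨Finset.mem_univ _, hI'card, hI'Δ⟩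
          have hsub2 : I' ∩ I'.image ρ ⊆ (I ∩ I.image ρ).erase ↑i := by
            intro x hx
            obtain ⟨hx1, hx2⟩ := Finset.mem_inter.mp hx
            obtain ⟨y, hyI', hyx⟩ := Finset.mem_image.mp hx2
            have hyb : y ≠ b := by
              rintro rfl
              rcases Finset.mem_insert.mp hx1 with h | h
              · exact rotIdx_ne y (hyx.trans h)
              · exact hρbI (hyx ▸ Finset.mem_of_mem_erase h)
            have hyI : y ∈ I := by
              rcases Finset.mem_insert.mp hyI' with h | h
              · exact absurd h hyb
              · exact Finset.mem_of_mem_erase h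
            have hxb : x ≠ b := by
              intro hxe
              have hyρ : y = ρ x := by rw [← hyx, hρdef, rotIdx_rotIdx]
              rw [hyρ, hxe] at hyI
              exact hρbI hyI
            have hxI : x ∈ I ∧ x ≠ ↑i := by
              rcases Finset.mem_insert.mp hx1 with h | h
              · exact absurd h hxb
              · exact ⟨Finset.mem_of_mem_erase h, (Finset.mem_erase.mp h).1⟩
            exact Finset.mem_erase.mpr ⟨hxI.2, Finset.mem_inter.mpr
              ⟨hxI.1, Finset.mem_image.mpr ⟨y, hyI, hyx⟩⟩⟩
          have hmemi : ↑i ∈ I ∩ I.image ρ := Finset.mem_inter.mpr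
            ⟨i.2, Finset.mem_image.mpr ⟨ρ ↑i, hρiI, by rw [hρdef, rotIdx_rotIdx]⟩⟩
          have hlt := lt_of_le_of_lt (Finset.card_le_card hsub2)
            (Finset.card_erase_lt_of_mem hmemi)
          exact absurd (hImin I' hI'B) (not_le.mpr hlt)
        have hrepr := Bas.sum_repr (Xᵀ b)
        rw [← hrepr]
        apply Submodule.sum_mem
        intro i _
        by_cases hiT : (i : Fin (2*n)) ∈ T
        · refine Submodule.smul_mem _ _ (Submodule.subset_span ?_)
          exact ⟨↑i, hiT, (hBas i).symm⟩
        · rw [hcoef i hiT, zero_smul]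
          exact Submodule.zero_mem _
      -- a is not in span of T-columns
      have haT : a ∉ T := fun h => (Finset.mem_filter.mp h).2 hρaI
      have hnot : Xᵀ a ∉ Submodule.span ℝ (Xᵀ '' ↑T) := by
        have h := hI_li.notMem_span_image
          (s := {k : ↥I | (k : Fin (2*n)) ∈ T}) (x := ⟨a, haI⟩) (by simpa using haT)
        have himg : (fun k : ↥I => Xᵀ ↑k) '' {k : ↥I | (k : Fin (2*n)) ∈ T}
            = Xᵀ '' ↑T := by
          ext v
          constructor
          · rintro ⟨k, hk, rfl⟩
            exact ⟨↑k, hk, rfl⟩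
          · rintro ⟨t, ht, rfl⟩
            exact ⟨⟨t, hTI ht⟩, ht, rfl⟩
        rwa [himg] at h
      -- the J columns span everything
      have hJli : LinearIndependent ℝ (fun j : ↥J => Xᵀ ↑j) :=
        (delta_ne_iff X J hJcard).mp hJΔ
      haveI : Nonempty ↥J := by
        obtain ⟨x, hx⟩ := Finset.card_pos.mp (hJcard ▸ hn)
        exact ⟨⟨x, hx⟩⟩
      have hcardJ : Fintype.card ↥J = Module.finrank ℝ (Fin n → ℝ) := by
        rw [Fintype.card_coe, hJcard, Module.finrank_fin_fun]
      let BasJ : Module.Basis ↥J ℝ (Fin n → ℝ) :=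
        basisOfLinearIndependentOfCardEqFinrank hJli hcardJ
      have hspanJ : Submodule.span ℝ (Xᵀ '' ↑J) = ⊤ := by
        have h1 := BasJ.span_eq
        have h2 : Set.range ⇑BasJ = Xᵀ '' ↑J := by
          rw [show BasJ = basisOfLinearIndependentOfCardEqFinrank hJli hcardJ from rfl,
            coe_basisOfLinearIndependentOfCardEqFinrank]
          rw [Set.image_eq_range (f := (Xᵀ : Fin (2*n) → Fin n → ℝ))]
          rfl
        rw [← h2]; exact h1
      have hJsub : Xᵀ '' ↑J ⊆ (Submodule.span ℝ (Xᵀ '' ↑T) : Set (Fin n → ℝ)) := by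
        rintro v ⟨j, hjJ, rfl⟩
        have hjJ' : j ∈ J := hjJ
        have hρjI : ρ j ∉ I := by
          obtain ⟨y, hy, rfl⟩ := Finset.mem_image.mp hjJ'
          rw [hρdef, rotIdx_rotIdx]
          exact Finset.mem_compl.mp hy
        by_cases hjI : j ∈ I
        · exact Submodule.subset_span ⟨j, Finset.mem_filter.mpr ⟨hjI, hρjI⟩, rfl⟩
        · exact claim1 j hjI hρjI
      apply hnot
      have hmem : Xᵀ a ∈ Submodule.span ℝ (Xᵀ '' ↑J) := by
        rw [hspanJ]; trivial
      exact Submodule.span_le.mpr hJsub hmem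
    · -- no pair inside I: then J = I and Delta X I = 0
      push_neg at hex
      have hsub : I ⊆ J := by
        intro x hx
        refine Finset.mem_image.mpr ⟨ρ x, Finset.mem_compl.mpr (hex x hx), ?_⟩
        rw [hρdef, rotIdx_rotIdx]
      have hIJ : I = J := Finset.eq_of_subset_of_card_le hsub (by rw [hJcard, hIcard])
      have := hneg I hIcard
      rw [← hJdef, ← hIJ] at this
      exact hIΔ (by linarith)
  refine ⟨main, ?_⟩
  intro hr
  have htop : Submodule.span ℝ (Set.range Xᵀ) = ⊤ := by
    apply Submodule.eq_top_of_finrank_eq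
    change Module.finrank ℝ (Submodule.span ℝ (Set.range (Matrix.col X))) = _
    rw [← Matrix.rank_eq_finrank_span_cols, hr, Module.finrank_fin_fun]
  obtain ⟨s, hs_sub, hs_span, hs_li⟩ := exists_linearIndependent ℝ (Set.range Xᵀ)
  have hs_fin : s.Finite := hs_li.setFinite
  haveI := hs_fin.fintype
  have hcards : s.toFinset.card = n := by
    have h1 := finrank_span_set_eq_card hs_li
    rw [hs_span, htop, finrank_top, Module.finrank_fin_fun] at h1
    exact h1.symm
  have hpos : 0 < 2*n := by omega
  let g : (Fin n → ℝ) → Fin (2*n) := fun v =>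
    if h : ∃ j, Xᵀ j = v then h.choose else ⟨0, hpos⟩
  have hg : ∀ v ∈ s, Xᵀ (g v) = v := by
    intro v hv
    have hve : ∃ j, Xᵀ j = v := hs_sub hv
    simp only [g, dif_pos hve]
    exact hve.choose_spec
  set I := s.toFinset.image g with hIdef
  have hginj : Set.InjOn g ↑s.toFinset := by
    intro v1 h1 v2 h2 hgv
    simp only [Finset.mem_coe, Set.mem_toFinset] at h1 h2
    rw [← hg v1 h1, ← hg v2 h2, hgv]
  have hIcard : I.card = n := by
    rw [hIdef, Finset.card_image_of_injOn hginj, hcards]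
  have hmem : ∀ k : ↥I, Xᵀ ↑k ∈ s := by
    intro k
    obtain ⟨v, hvF, hgv⟩ := Finset.mem_image.mp k.2
    rw [Set.mem_toFinset] at hvF
    rw [← hgv, hg v hvF]
    exact hvF
  let ψ : ↥I → ↥s := fun k => ⟨Xᵀ ↑k, hmem k⟩
  have hψinj : Function.Injective ψ := by
    intro k1 k2 hk
    have hv : Xᵀ ↑k1 = Xᵀ ↑k2 := congrArg Subtype.val hk
    obtain ⟨v1, hv1, hg1⟩ := Finset.mem_image.mp k1.2
    obtain ⟨v2, hv2, hg2⟩ := Finset.mem_image.mp k2.2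
    rw [Set.mem_toFinset] at hv1 hv2
    have e1 : Xᵀ ↑k1 = v1 := by rw [← hg1, hg v1 hv1]
    have e2 : Xᵀ ↑k2 = v2 := by rw [← hg2, hg v2 hv2]
    have : v1 = v2 := by rw [← e1, ← e2, hv]
    apply Subtype.ext
    rw [← hg1, ← hg2, this]
  have hli : LinearIndependent ℝ (fun k : ↥I => Xᵀ ↑k) := hs_li.comp ψ hψinj
  exact (delta_ne_iff X I hIcard).mpr hli (main I hIcard)
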